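/- There exists a constant C > 0 such that for every integer n ≥ 1, | A_n − ( −i·tanθ + β·λ^{−2n} ) | ≤ C·λ^{−4n}, where A_n = (a_n²·(1−iγ_n))^{−1} − iγ_n and β = (1+2i·tanθ)/cos²θ. -/

import Mathlib

open Real Complex MeasureTheory

noncomputable section

/-- Quantized translation `T^h_{(a,b)}`. -/
def Tq (h a b : ℝ) (u : ℝ → ℂ) : ℝ → ℂ := fun x =>
  Complex.exp ((-(Real.pi * a * b / h) : ℝ) * Complex.I) *
    (Complex.exp ((2 * Real.pi * b * x / h : ℝ) * Complex.I) * u (x - a))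

/-- Gaussian wave packet `Φ^h_{(q,p)}`. -/
def WP (h q p : ℝ) : ℝ → ℂ := fun x =>
  (((2 / h) ^ ((1 : ℝ) / 4) : ℝ) : ℂ) *
    (Complex.exp ((2 * Real.pi * p * (x - q) / h : ℝ) * Complex.I) *
      Complex.exp ((-(Real.pi * (x - q) ^ 2 / h) : ℝ) : ℂ))

/-- The L² inner product `⟨f, g⟩ = ∫ f x * conj (g x)`. -/
def ip (f g : ℝ → ℂ) : ℂ := ∫ x : ℝ, f x * (starRingEnd ℂ) (g x)

/-- The `h`-Fourier transform. -/
def Fh (h : ℝ) (f : ℝ → ℂ) : ℝ → ℂ := fun ξ =>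
  ((h : ℂ))⁻¹ * ∫ x : ℝ, Complex.exp ((-(2 * Real.pi * x * ξ / h) : ℝ) * Complex.I) * f x

/-- The metaplectic operator of the matrix `[[a,b],[c,d]]`. -/
def Mhat (h a b c d : ℝ) (f : ℝ → ℂ) : ℝ → ℂ := fun x =>
  ((Real.sqrt a)⁻¹ : ℂ) *
    ∫ ξ : ℝ,
      Complex.exp ((2 * Real.pi * ((c * x ^ 2 - b * ξ ^ 2 + 2 * x * ξ) / (2 * a)) / h : ℝ) *
        Complex.I) * Fh h f ξ

/-- The large eigenvalue `λ = (3+√5)/2` of the cat map. -/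
def lam : ℝ := (3 + Real.sqrt 5) / 2

/-- The angle `θ` of the unstable direction: `tan θ = (√5−1)/2`. -/
def θc : ℝ := Real.arctan ((Real.sqrt 5 - 1) / 2)

/-- entry `a_n` of `Mⁿ`. -/
def an (n : ℕ) : ℝ := Real.cos θc ^ 2 * lam ^ (n : ℤ) + Real.sin θc ^ 2 * lam ^ (-(n : ℤ))

/-- entry `b_n = c_n` of `Mⁿ`. -/
def bn (n : ℕ) : ℝ := Real.cos θc * Real.sin θc * (lam ^ (n : ℤ) - lam ^ (-(n : ℤ)))

/-- entry `d_n` of `Mⁿ`. -/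
def dn (n : ℕ) : ℝ := Real.sin θc ^ 2 * lam ^ (n : ℤ) + Real.cos θc ^ 2 * lam ^ (-(n : ℤ))

/-- `γ_n = b_n / a_n`. -/
def gn (n : ℕ) : ℝ := bn n / an n

/-- `β = (1 + 2i tan θ)/cos² θ`. -/
def βc : ℂ := (1 + 2 * Complex.I * (Real.tan θc : ℂ)) / ((Real.cos θc : ℂ)) ^ 2

/-- `A_n = (a_n² (1 − i γ_n))⁻¹ − i γ_n`. -/
def An (n : ℕ) : ℂ := (((an n : ℂ)) ^ 2 * (1 - Complex.I * (gn n : ℂ)))⁻¹ - Complex.I * (gn n : ℂ)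

/-- The L² normalizing constant `C(h,n)` of the Gaussian `e^{-(π/h) A_n x²}`. -/
def Chn (h : ℝ) (n : ℕ) : ℝ := (2 * (An n).re / h) ^ ((1 : ℝ) / 4)

/-- The propagated wave packet in closed form, `F_n^h`. -/
def Fnh (h : ℝ) (n : ℕ) : ℝ → ℂ := fun x =>
  (Chn h n : ℂ) * Complex.exp (-((Real.pi / h : ℝ) : ℂ) * An n * (x : ℂ) ^ 2)

/-- The damped Lagrangian state `L^h(n)`. -/
def Lhn (h : ℝ) (n : ℕ) : ℝ → ℂ := fun x =>
  (Chn h n : ℂ) * Complex.exp ((Real.pi * Real.tan θc * x ^ 2 / h : ℝ) * Complex.I) *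
    Complex.exp (-((Real.pi : ℝ) : ℂ) * βc * (x : ℂ) ^ 2 / ((h * lam ^ (2 * n) : ℝ) : ℂ))

/-- The metaplectic operator of `Mⁿ`. -/
def MhatN (h : ℝ) (n : ℕ) : (ℝ → ℂ) → (ℝ → ℂ) := Mhat h (an n) (bn n) (bn n) (dn n)

/-- Membership in `D_θ`, the closed `cos(θ)/2`-neighborhood of the line `ξ = tan θ · x`. -/
def inD (q p : ℝ) : Prop := |q * Real.sin θc - p * Real.cos θc| ≤ Real.cos θc / 2

lemma one_le_norm_aux (x y : ℝ) (hx : 1 ≤ x) :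
    1 ≤ ‖((x:ℂ) + (y:ℂ)*Complex.I)‖ := by
  have h := Complex.abs_re_le_norm ((x:ℂ) + (y:ℂ)*Complex.I)
  simp only [Complex.add_re, Complex.ofReal_re, Complex.mul_re, Complex.ofReal_im,
    Complex.I_re, Complex.I_im] at h
  calc (1:ℝ) ≤ x := hx
  _ ≤ |x| := le_abs_self x
  _ ≤ _ := by simpa using h

lemma ne_zero_aux (x y : ℝ) (hx : x ≠ 0) : ((x:ℂ) + (y:ℂ)*Complex.I) ≠ 0 := by
  intro h
  apply hx
  have := congrArg Complex.re h
  simpa using this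

lemma norm_aux_le (x y : ℝ) : ‖((x:ℂ) + (y:ℂ)*Complex.I)‖ ≤ |x| + |y| := by
  calc ‖((x:ℂ) + (y:ℂ)*Complex.I)‖ ≤ ‖((x:ℂ))‖ + ‖(y:ℂ)*Complex.I‖ := norm_add_le _ _
  _ = |x| + |y| := by simp

set_option maxHeartbeats 1000000 in
lemma alg_aux (T M : ℂ) (hM : M ≠ 0) (h1 : (1:ℂ)+T^2 ≠ 0)
    (hE : (1:ℂ) + T^2*M ≠ 0)
    (hD : (1:ℂ) + T^2*M - Complex.I*T*(1-M) ≠ 0)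
    (hF : (1:ℂ) - Complex.I*T ≠ 0) :
    (((1+T^2*M)^2/(M*(1+T^2)^2)) * (1 - Complex.I*(T*(1-M)/(1+T^2*M))))⁻¹
      - Complex.I*(T*(1-M)/(1+T^2*M))
      - (-Complex.I*T + ((1+2*Complex.I*T)*(1+T^2)) * M)
    = M^2 *
      ( ((1+T^2)^2*(-T^2*(2+T^2*M)+Complex.I*T*(T^2-1-T^2*M)))
          / ((1+T^2*M)*(1+T^2*M-Complex.I*T*(1-M))*(1-Complex.I*T))
        - Complex.I*T^3*(1+T^2)/(1+T^2*M) ) := by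
  have hX : ((1+T^2*M)^2/(M*(1+T^2)^2)) * (1 - Complex.I*(T*(1-M)/(1+T^2*M)))
      = ((1+T^2*M)*(1+T^2*M-Complex.I*T*(1-M)))/(M*(1+T^2)^2) := by
    field_simp
  have I2 : Complex.I^2 = -1 := Complex.I_sq
  have I3 : Complex.I^3 = -Complex.I := by rw [pow_succ, I2]; ring
  have I4 : Complex.I^4 = 1 := by rw [show (4:ℕ) = 2*2 from rfl, pow_mul, I2]; norm_num
  rw [hX, inv_div]
  have hD' : 1 + M*T^2 - T*Complex.I*(1-M) ≠ 0 := by convert hD using 1; ring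
  have hE' : 1 + M*T^2 ≠ 0 := by convert hE using 1; ring
  have hF' : 1 - T*Complex.I ≠ 0 := by convert hF using 1; ring
  field_simp
  ring_nf
  simp only [I2, I3, I4]
  ring

lemma Gbound_aux (t m : ℝ) (ht0 : 0 ≤ t) (ht1 : t ≤ 1) (hm0 : 0 ≤ m) (hm1 : m ≤ 1) :
    ‖((1+(t:ℂ)^2)^2*(-(t:ℂ)^2*(2+(t:ℂ)^2*(m:ℂ))+Complex.I*(t:ℂ)*((t:ℂ)^2-1-(t:ℂ)^2*(m:ℂ)))
          / ((1+(t:ℂ)^2*(m:ℂ))*(1+(t:ℂ)^2*(m:ℂ)-Complex.I*(t:ℂ)*(1-(m:ℂ)))*(1-Complex.I*(t:ℂ)))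
        - Complex.I*(t:ℂ)^3*(1+(t:ℂ)^2)/(1+(t:ℂ)^2*(m:ℂ)))‖ ≤ 100 := by
  have habs : ∀ x : ℝ, 0 ≤ x → ‖((x:ℝ):ℂ)‖ = x := by
    intro x hx
    rw [Complex.norm_real]
    exact _root_.abs_of_nonneg hx
  have hsec : ‖(-(t:ℂ)^2*(2+(t:ℂ)^2*(m:ℂ))+Complex.I*(t:ℂ)*((t:ℂ)^2-1-(t:ℂ)^2*(m:ℂ)))‖ ≤ 6 := by
    have e : (-(t:ℂ)^2*(2+(t:ℂ)^2*(m:ℂ))+Complex.I*(t:ℂ)*((t:ℂ)^2-1-(t:ℂ)^2*(m:ℂ)))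
        = (((-(t^2*(2+t^2*m)) : ℝ)):ℂ) + (((t*(t^2-1-t^2*m)) : ℝ):ℂ)*Complex.I := by
      push_cast; ring
    rw [e]
    have hA : t^2 ≤ 1 := by nlinarith
    have hB : t^2*m ≤ 1 := by nlinarith [sq_nonneg t, mul_le_one₀ hA hm0 hm1]
    have hB0 : 0 ≤ t^2*m := by positivity
    have h1 : |(-(t^2*(2+t^2*m)) : ℝ)| ≤ 3 := by
      rw [_root_.abs_le]; constructor <;> nlinarith [sq_nonneg t]
    have h2 : |(t*(t^2-1-t^2*m) : ℝ)| ≤ 3 := by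
      rw [_root_.abs_le]; constructor <;> nlinarith [sq_nonneg t, mul_nonneg ht0 hB0]
    have := norm_aux_le (-(t^2*(2+t^2*m))) (t*(t^2-1-t^2*m))
    linarith
  have hone : ‖(1:ℂ)+(t:ℂ)^2‖ ≤ 2 := by
    have e : (1:ℂ)+(t:ℂ)^2 = (((1+t^2 : ℝ)):ℂ) := by push_cast; ring
    rw [e, habs _ (by nlinarith)]; nlinarith
  have hN1 : ‖(1+(t:ℂ)^2)^2*(-(t:ℂ)^2*(2+(t:ℂ)^2*(m:ℂ))+Complex.I*(t:ℂ)*((t:ℂ)^2-1-(t:ℂ)^2*(m:ℂ)))‖ ≤ 24 := by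
    rw [norm_mul, norm_pow]
    have h4 : ‖(1:ℂ)+(t:ℂ)^2‖^2 ≤ 2^2 := pow_le_pow_left₀ (norm_nonneg _) hone 2
    have := mul_le_mul h4 hsec (norm_nonneg _) (by norm_num : (0:ℝ) ≤ 2^2)
    linarith
  have hd1 : 1 ≤ ‖(1:ℂ)+(t:ℂ)^2*(m:ℂ)‖ := by
    have e : (1:ℂ)+(t:ℂ)^2*(m:ℂ) = (((1+t^2*m : ℝ)):ℂ) := by push_cast; ring
    rw [e, habs _ (by nlinarith)]; nlinarith
  have hd2 : 1 ≤ ‖(1:ℂ)+(t:ℂ)^2*(m:ℂ)-Complex.I*(t:ℂ)*(1-(m:ℂ))‖ := by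
    have e : (1:ℂ)+(t:ℂ)^2*(m:ℂ)-Complex.I*(t:ℂ)*(1-(m:ℂ))
        = (((1+t^2*m : ℝ)):ℂ) + (((-(t*(1-m)) : ℝ)):ℂ)*Complex.I := by push_cast; ring
    rw [e]; exact one_le_norm_aux _ _ (by nlinarith)
  have hd3 : 1 ≤ ‖(1:ℂ)-Complex.I*(t:ℂ)‖ := by
    have e : (1:ℂ)-Complex.I*(t:ℂ) = (((1:ℝ)):ℂ) + (((-t : ℝ)):ℂ)*Complex.I := by push_cast; ring
    rw [e]; exact one_le_norm_aux _ _ le_rfl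
  have hD1 : 1 ≤ ‖(1+(t:ℂ)^2*(m:ℂ))*(1+(t:ℂ)^2*(m:ℂ)-Complex.I*(t:ℂ)*(1-(m:ℂ)))*(1-Complex.I*(t:ℂ))‖ := by
    rw [norm_mul, norm_mul]
    have h12 : (1:ℝ)*1 ≤ ‖(1:ℂ)+(t:ℂ)^2*(m:ℂ)‖*‖(1:ℂ)+(t:ℂ)^2*(m:ℂ)-Complex.I*(t:ℂ)*(1-(m:ℂ))‖ :=
      mul_le_mul hd1 hd2 zero_le_one (norm_nonneg _)
    have h123 := mul_le_mul h12 hd3 zero_le_one (by positivity)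
    linarith
  have hN2 : ‖Complex.I*(t:ℂ)^3*(1+(t:ℂ)^2)‖ ≤ 2 := by
    have hnt : ‖((t:ℝ):ℂ)‖ = t := habs t ht0
    rw [norm_mul, norm_mul, Complex.norm_I, one_mul, norm_pow, hnt]
    nlinarith [norm_nonneg ((1:ℂ)+(t:ℂ)^2), pow_le_one₀ ht0 ht1 (n := 3),
      pow_nonneg ht0 3]
  have hq1 : ‖(1+(t:ℂ)^2)^2*(-(t:ℂ)^2*(2+(t:ℂ)^2*(m:ℂ))+Complex.I*(t:ℂ)*((t:ℂ)^2-1-(t:ℂ)^2*(m:ℂ)))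
      / ((1+(t:ℂ)^2*(m:ℂ))*(1+(t:ℂ)^2*(m:ℂ)-Complex.I*(t:ℂ)*(1-(m:ℂ)))*(1-Complex.I*(t:ℂ)))‖ ≤ 24 := by
    rw [norm_div]
    calc _ ≤ (24:ℝ)/1 := by
          apply div_le_div₀ (by norm_num) hN1 (by norm_num) hD1
    _ = 24 := by norm_num
  have hq2 : ‖Complex.I*(t:ℂ)^3*(1+(t:ℂ)^2)/(1+(t:ℂ)^2*(m:ℂ))‖ ≤ 2 := by
    rw [norm_div]
    calc _ ≤ (2:ℝ)/1 := by
          apply div_le_div₀ (by norm_num) hN2 (by norm_num) hd1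
    _ = 2 := by norm_num
  have := norm_sub_le
    ((1+(t:ℂ)^2)^2*(-(t:ℂ)^2*(2+(t:ℂ)^2*(m:ℂ))+Complex.I*(t:ℂ)*((t:ℂ)^2-1-(t:ℂ)^2*(m:ℂ)))
      / ((1+(t:ℂ)^2*(m:ℂ))*(1+(t:ℂ)^2*(m:ℂ)-Complex.I*(t:ℂ)*(1-(m:ℂ)))*(1-Complex.I*(t:ℂ))))
    (Complex.I*(t:ℂ)^3*(1+(t:ℂ)^2)/(1+(t:ℂ)^2*(m:ℂ)))
  linarith

set_option maxHeartbeats 1000000 in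
/-- asymptotics of `A_n`. -/
theorem An_asymptotics :
    ∃ C : ℝ, 0 < C ∧ ∀ n : ℕ, 1 ≤ n →
      ‖An n - (-Complex.I * (Real.tan θc : ℂ) + βc * ((lam ^ (-(2 * (n : ℤ))) : ℝ) : ℂ))‖ ≤
        C * lam ^ (-(4 * (n : ℤ))) := by
  refine ⟨100, by norm_num, fun n hn => ?_⟩
  have h5 : Real.sqrt 5 ^ 2 = 5 := Real.sq_sqrt (by norm_num)
  have h5n : 0 ≤ Real.sqrt 5 := Real.sqrt_nonneg 5
  have h52 : 2 < Real.sqrt 5 := by nlinarith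
  have h53 : Real.sqrt 5 < 3 := by nlinarith
  set u : ℝ := (Real.sqrt 5 - 1)/2 with hu
  have hu0 : 0 < u := by rw [hu]; nlinarith
  have hu1 : u ≤ 1 := by rw [hu]; nlinarith
  have ht : Real.tan θc = u := by
    unfold θc; rw [Real.tan_arctan]
  have hlam1 : 1 ≤ lam := by unfold lam; nlinarith
  have hlam0 : 0 < lam := lt_of_lt_of_le one_pos hlam1
  set L : ℝ := lam ^ n with hLdef
  have hL0 : 0 < L := pow_pos hlam0 n
  have hL1 : 1 ≤ L := one_le_pow₀ hlam1
  set m : ℝ := (L^2)⁻¹ with hmdef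
  have hm0 : 0 < m := by rw [hmdef]; positivity
  have hm1 : m ≤ 1 := by
    rw [hmdef]
    have hL2 : (1:ℝ) ≤ L^2 := by nlinarith
    rw [inv_le_one_iff₀]
    right; exact hL2
  have hz2 : lam ^ (-(2 * (n:ℤ))) = m := by
    rw [hmdef, zpow_neg]
    congr 1
    rw [show (2 * (n:ℤ)) = ((n*2 : ℕ) : ℤ) by push_cast; ring, zpow_natCast, pow_mul, hLdef]
  have hz4 : lam ^ (-(4 * (n:ℤ))) = m^2 := by
    have h : lam ^ ((n*4:ℕ):ℤ) = (L^2)^2 := by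
      rw [zpow_natCast, pow_mul, ← hLdef]
      ring
    rw [show (-(4 * (n:ℤ))) = -((n*4:ℕ):ℤ) by push_cast; ring, zpow_neg, h, hmdef]
    exact (inv_pow (L^2) 2).symm
  -- trigonometry
  have hcos0 : 0 < Real.cos θc := by
    unfold θc; exact Real.cos_arctan_pos _
  have hsin : Real.sin θc = u * Real.cos θc := by
    have h := Real.tan_eq_sin_div_cos θc
    rw [ht, eq_div_iff hcos0.ne'] at h
    linarith [h]
  have hden : (0:ℝ) < 1 + u^2 := by positivity
  have hc2 : Real.cos θc ^ 2 = 1/(1+u^2) := by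
    have hp := Real.sin_sq_add_cos_sq θc
    rw [hsin] at hp
    field_simp
    nlinarith [hp]
  -- matrix entries
  have hzn : lam ^ (n:ℤ) = L := by rw [hLdef, zpow_natCast]
  have hznn : lam ^ (-(n:ℤ)) = L⁻¹ := by rw [zpow_neg, hzn]
  have han : an n = (L + u^2 * L⁻¹)/(1+u^2) := by
    unfold an
    rw [hzn, hznn, hsin, mul_pow, hc2]
    field_simp
  have hbn : bn n = u*(L - L⁻¹)/(1+u^2) := by
    unfold bn
    rw [hzn, hznn, hsin, show Real.cos θc * (u * Real.cos θc) = u * Real.cos θc^2 by ring, hc2]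
    field_simp
  have hsum0 : (0:ℝ) < L + u^2 * L⁻¹ := by positivity
  have h1um : (0:ℝ) < 1 + u^2*m := by positivity
  have hgnr : gn n = u*(1-m)/(1+u^2*m) := by
    unfold gn
    rw [han, hbn, hmdef]
    have hq : L^2 + u^2 ≠ 0 := by positivity
    field_simp
  have hanosq : (an n)^2 = (1+u^2*m)^2/(m*(1+u^2)^2) := by
    rw [han, hmdef]
    field_simp
  -- complex versions
  have hMC : ((m:ℝ):ℂ) ≠ 0 := Complex.ofReal_ne_zero.2 hm0.ne'
  have h1C : (1:ℂ)+((u:ℝ):ℂ)^2 ≠ 0 := by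
    rw [show (1:ℂ)+((u:ℝ):ℂ)^2 = (((1+u^2:ℝ)):ℂ) by push_cast; ring]
    exact Complex.ofReal_ne_zero.2 hden.ne'
  have hEC : (1:ℂ) + ((u:ℝ):ℂ)^2*((m:ℝ):ℂ) ≠ 0 := by
    rw [show (1:ℂ)+((u:ℝ):ℂ)^2*((m:ℝ):ℂ) = (((1+u^2*m:ℝ)):ℂ) by push_cast; ring]
    exact Complex.ofReal_ne_zero.2 h1um.ne'
  have hDC : (1:ℂ) + ((u:ℝ):ℂ)^2*((m:ℝ):ℂ) - Complex.I*((u:ℝ):ℂ)*(1-((m:ℝ):ℂ)) ≠ 0 := by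
    rw [show (1:ℂ)+((u:ℝ):ℂ)^2*((m:ℝ):ℂ) - Complex.I*((u:ℝ):ℂ)*(1-((m:ℝ):ℂ))
      = (((1+u^2*m:ℝ)):ℂ) + (((-(u*(1-m)):ℝ)):ℂ)*Complex.I by push_cast; ring]
    exact ne_zero_aux _ _ h1um.ne'
  have hFC : (1:ℂ) - Complex.I*((u:ℝ):ℂ) ≠ 0 := by
    rw [show (1:ℂ) - Complex.I*((u:ℝ):ℂ) = (((1:ℝ)):ℂ) + (((-u:ℝ)):ℂ)*Complex.I by push_cast; ring]
    exact ne_zero_aux _ _ one_ne_zero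
  have hβ : βc = (1+2*Complex.I*((u:ℝ):ℂ))*(1+((u:ℝ):ℂ)^2) := by
    unfold βc
    rw [ht]
    have hc2c : ((Real.cos θc : ℂ))^2 = 1/(1+((u:ℝ):ℂ)^2) := by
      rw [← Complex.ofReal_pow, hc2]
      push_cast
      ring
    rw [hc2c]
    field_simp
  have hAnC : An n = ((((1+((u:ℝ):ℂ)^2*((m:ℝ):ℂ))^2/(((m:ℝ):ℂ)*(1+((u:ℝ):ℂ)^2)^2))
        * (1 - Complex.I*(((u:ℝ):ℂ)*(1-((m:ℝ):ℂ))/(1+((u:ℝ):ℂ)^2*((m:ℝ):ℂ)))))⁻¹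
      - Complex.I*(((u:ℝ):ℂ)*(1-((m:ℝ):ℂ))/(1+((u:ℝ):ℂ)^2*((m:ℝ):ℂ)))) := by
    unfold An
    rw [show ((an n : ℝ):ℂ)^2 = (((an n)^2 : ℝ):ℂ) by push_cast; ring, hanosq, hgnr]
    push_cast
    ring_nf
  have key := alg_aux ((u:ℝ):ℂ) ((m:ℝ):ℂ) hMC h1C hEC hDC hFC
  rw [ht, hz2, hz4, hβ, hAnC, key]
  rw [norm_mul, norm_pow, Complex.norm_real, Real.norm_eq_abs, _root_.abs_of_nonneg hm0.le]
  have hGb := Gbound_aux u m hu0.le hu1 hm0.le hm1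
  have hmsq : (0:ℝ) ≤ m^2 := sq_nonneg m
  nlinarith [hGb, norm_nonneg (((1+((u:ℝ):ℂ)^2)^2*(-((u:ℝ):ℂ)^2*(2+((u:ℝ):ℂ)^2*((m:ℝ):ℂ))+Complex.I*((u:ℝ):ℂ)*(((u:ℝ):ℂ)^2-1-((u:ℝ):ℂ)^2*((m:ℝ):ℂ)))
          / ((1+((u:ℝ):ℂ)^2*((m:ℝ):ℂ))*(1+((u:ℝ):ℂ)^2*((m:ℝ):ℂ)-Complex.I*((u:ℝ):ℂ)*(1-((m:ℝ):ℂ)))*(1-Complex.I*((u:ℝ):ℂ)))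
        - Complex.I*((u:ℝ):ℂ)^3*(1+((u:ℝ):ℂ)^2)/(1+((u:ℝ):ℂ)^2*((m:ℝ):ℂ))))]
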